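/- The Morley form satisfies (X_i − Y_i)·morl(f1,f2) = 0 in [B ⊗_A B]_{δ+1} for i = 1,2, and this implies that for all p + q = δ and all b ∈ B_q, one has (b ⊗ 1)·morl_{p,q}(f1,f2) = sylv_{(0,0)}(f1,f2) ⊗ b, and for all b ∈ B_p, (1 ⊗ b)·morl_{p,q}(f1,f2) = b ⊗ sylv_{(0,0)}(f1,f2). -/

import Mathlib

open MvPolynomial

namespace Stmt6Aux

variable {A : Type*} [CommRing A]

lemma X_mul_cancel {σ : Type*} (i : σ) {u v : MvPolynomial σ A}
    (h : X i * u = X i * v) : u = v :=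
  (isRegular_X (n := i)).left h

lemma key {σ : Type*} [DecidableEq σ] {i j : σ} (hij : i ≠ j) {u v : MvPolynomial σ A}
    (h : X i * u = X j * v) : ∃ w, u = X j * w ∧ v = X i * w := by
  have hmod : v.modMonomial (Finsupp.single i 1) = 0 := by
    ext m
    rw [coeff_zero]
    by_cases hle : Finsupp.single i 1 ≤ m
    · rw [coeff_modMonomial_of_le _ hle]
    · rw [coeff_modMonomial_of_not_le _ hle]
      have h1 : coeff m v = coeff (Finsupp.single j 1 + m) (X j * v) := (coeff_X_mul m j v).symm
      rw [h1, ← h, coeff_X_mul']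
      rw [if_neg]
      intro hmem
      have hmi : m i = 0 := by
        rw [Finsupp.single_le_iff] at hle; omega
      have hz : (Finsupp.single j (1:ℕ) + m) i = 0 := by
        rw [Finsupp.add_apply, Finsupp.single_apply, if_neg (Ne.symm hij), hmi]
      exact (Finsupp.mem_support_iff.mp hmem) hz
  have hv : v = X i * (v.divMonomial (Finsupp.single i 1)) := by
    conv_lhs => rw [← divMonomial_add_modMonomial_single v i]
    rw [hmod, add_zero]
  refine ⟨v.divMonomial (Finsupp.single i 1), ?_, hv⟩
  apply X_mul_cancel i
  rw [h]
  conv_lhs => rw [hv]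
  ring

lemma keyXY {u v : MvPolynomial (Fin 4) A}
    (h : (X 0 - X 2) * u = (X 1 - X 3) * v) :
    ∃ w, u = (X 1 - X 3) * w ∧ v = (X 0 - X 2) * w := by
  let σf : MvPolynomial (Fin 4) A →ₐ[A] MvPolynomial (Fin 4) A :=
    aeval ![X 0 + X 2, X 1 + X 3, X 2, X 3]
  let τf : MvPolynomial (Fin 4) A →ₐ[A] MvPolynomial (Fin 4) A :=
    aeval ![X 0 - X 2, X 1 - X 3, X 2, X 3]
  have hcomp : ∀ p, τf (σf p) = p := by
    have : τf.comp σf = AlgHom.id A _ := by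
      apply MvPolynomial.algHom_ext
      intro i
      fin_cases i <;> simp [σf, τf]
    intro p
    have := congrArg (fun φ => φ p) this
    simpa using this
  have h2 : X (0 : Fin 4) * σf u = X 1 * σf v := by
    have h' := congrArg σf h
    simp only [map_mul, map_sub, σf, aeval_X] at h'
    simpa [σf] using h'
  obtain ⟨w', hw1, hw2⟩ := key (by decide : (0 : Fin 4) ≠ 1) h2
  refine ⟨τf w', ?_, ?_⟩
  · have := congrArg τf hw1
    rw [hcomp] at this
    rw [this, map_mul]
    simp [τf]
  · have := congrArg τf hw2
    rw [hcomp] at this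
    rw [this, map_mul]
    simp [τf]

lemma weight_fin4 (w : Fin 4 → ℕ) (d : Fin 4 →₀ ℕ) :
    Finsupp.weight w d = d 0 * w 0 + d 1 * w 1 + d 2 * w 2 + d 3 * w 3 := by
  rw [Finsupp.weight_apply, Finsupp.sum_fintype _ _ (fun i => zero_smul ℕ (w i)),
    Fin.sum_univ_four]
  simp [smul_eq_mul]

lemma weight_fin2 (w : Fin 2 → ℕ) (d : Fin 2 →₀ ℕ) :
    Finsupp.weight w d = d 0 * w 0 + d 1 * w 1 := by
  rw [Finsupp.weight_apply, Finsupp.sum_fintype _ _ (fun i => zero_smul ℕ (w i)),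
    Fin.sum_univ_two]
  simp [smul_eq_mul]

lemma weight_wX (d : Fin 4 →₀ ℕ) :
    Finsupp.weight ![1,1,0,0] d = d 0 + d 1 := by
  rw [weight_fin4]
  norm_num
  show d 0 + d 1 + d 2 * 0 + d 3 * 0 = d 0 + d 1
  simp

lemma weight_one4 (d : Fin 4 →₀ ℕ) :
    Finsupp.weight (1 : Fin 4 → ℕ) d = d 0 + d 1 + d 2 + d 3 := by
  rw [weight_fin4]
  simp

lemma weight_one2 (d : Fin 2 →₀ ℕ) :
    Finsupp.weight (1 : Fin 2 → ℕ) d = d 0 + d 1 := by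
  rw [weight_fin2]
  simp

lemma weight_mapDomain {σ τ : Type*} (f : σ → τ) (w : τ → ℕ) (u : σ →₀ ℕ) :
    Finsupp.weight w (Finsupp.mapDomain f u) = Finsupp.weight (w ∘ f) u := by
  classical
  simp only [Finsupp.weight, LinearMap.toAddMonoidHom_coe]
  exact Finsupp.linearCombination_mapDomain (R := ℕ) (v' := w) f u

lemma renameX_wh {b : MvPolynomial (Fin 2) A} {n : ℕ} (hb : b.IsHomogeneous n) :
    IsWeightedHomogeneous ![1,1,0,0] (rename (![0,1] : Fin 2 → Fin 4) b) n := by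
  intro d hd
  obtain ⟨u, hu, hcu⟩ := coeff_rename_ne_zero _ _ _ hd
  rw [← hu, weight_mapDomain]
  have hcongr : ((![1,1,0,0] : Fin 4 → ℕ) ∘ (![0,1] : Fin 2 → Fin 4)) = (1 : Fin 2 → ℕ) := by
    funext i; fin_cases i <;> rfl
  rw [hcongr]
  exact hb hcu

lemma renameY_wh (b : MvPolynomial (Fin 2) A) :
    IsWeightedHomogeneous ![1,1,0,0] (rename (![2,3] : Fin 2 → Fin 4) b) 0 := by
  intro d hd
  obtain ⟨u, hu, hcu⟩ := coeff_rename_ne_zero _ _ _ hd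
  rw [← hu, weight_mapDomain]
  have hcongr : ((![1,1,0,0] : Fin 4 → ℕ) ∘ (![2,3] : Fin 2 → Fin 4)) = (fun _ => 0) := by
    funext i; fin_cases i <;> rfl
  rw [hcongr, Finsupp.weight_apply]
  simp [Finsupp.sum]

lemma comp_monomial (w : Fin 4 → ℕ) (n : ℕ) (m : Fin 4 →₀ ℕ) (c : A) :
    weightedHomogeneousComponent w n (monomial m c) =
      if n = Finsupp.weight w m then monomial m c else 0 :=
  weightedHomogeneousComponent_of_mem
    ((mem_weightedHomogeneousSubmodule _ _ _ _).mpr (isWeightedHomogeneous_monomial w m c rfl))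

lemma comp_mul {w : Fin 4 → ℕ} {c : MvPolynomial (Fin 4) A} {q : ℕ}
    (hc : IsWeightedHomogeneous w c q) (g : MvPolynomial (Fin 4) A) (k : ℕ) :
    weightedHomogeneousComponent w (q + k) (c * g) =
      c * weightedHomogeneousComponent w k g := by
  induction g using MvPolynomial.induction_on' with
  | monomial m r =>
    by_cases hm : Finsupp.weight w m = k
    · rw [IsWeightedHomogeneous.weightedHomogeneousComponent_same
        (hm ▸ hc.mul (isWeightedHomogeneous_monomial w m r rfl)),
        IsWeightedHomogeneous.weightedHomogeneousComponent_same
        (hm ▸ isWeightedHomogeneous_monomial w m r rfl)]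
    · rw [IsWeightedHomogeneous.weightedHomogeneousComponent_ne _
        (hc.mul (isWeightedHomogeneous_monomial w m r rfl)) (by omega),
        IsWeightedHomogeneous.weightedHomogeneousComponent_ne _
        (isWeightedHomogeneous_monomial w m r rfl) (Ne.symm hm), mul_zero]
  | add p q hp hq =>
    rw [mul_add, map_add, map_add, hp, hq, mul_add]

lemma comp_mul_mem {w : Fin 4 → ℕ} {g : MvPolynomial (Fin 4) A} {n : ℕ}
    (hg : IsWeightedHomogeneous w g n) (r : MvPolynomial (Fin 4) A) (k : ℕ) :
    weightedHomogeneousComponent w k (r * g) ∈ Ideal.span {g} := by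
  induction r using MvPolynomial.induction_on' with
  | monomial m c =>
    have hmg : IsWeightedHomogeneous w (monomial m c * g) (Finsupp.weight w m + n) :=
      (isWeightedHomogeneous_monomial w m c rfl).mul hg
    by_cases hk : k = Finsupp.weight w m + n
    · rw [hk, IsWeightedHomogeneous.weightedHomogeneousComponent_same hmg]
      exact Ideal.mul_mem_left _ _ (Ideal.subset_span rfl)
    · rw [IsWeightedHomogeneous.weightedHomogeneousComponent_ne _ hmg hk]
      exact zero_mem _
  | add p q hp hq =>
    rw [add_mul, map_add]
    exact add_mem hp hq

lemma span4_comp {w : Fin 4 → ℕ} {g1 g2 g3 g4 : MvPolynomial (Fin 4) A} {n1 n2 n3 n4 : ℕ}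
    (h1 : IsWeightedHomogeneous w g1 n1) (h2 : IsWeightedHomogeneous w g2 n2)
    (h3 : IsWeightedHomogeneous w g3 n3) (h4 : IsWeightedHomogeneous w g4 n4)
    {P : MvPolynomial (Fin 4) A} (hP : P ∈ Ideal.span {g1, g2, g3, g4}) (k : ℕ) :
    weightedHomogeneousComponent w k P ∈ Ideal.span {g1, g2, g3, g4} := by
  have hs1 : ({g1} : Set (MvPolynomial (Fin 4) A)) ⊆ {g1,g2,g3,g4} := by
    intro x hx; rw [hx]; simp
  have hs2 : ({g2} : Set (MvPolynomial (Fin 4) A)) ⊆ {g1,g2,g3,g4} := by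
    intro x hx; rw [hx]; simp
  have hs3 : ({g3} : Set (MvPolynomial (Fin 4) A)) ⊆ {g1,g2,g3,g4} := by
    intro x hx; rw [hx]; simp
  have hs4 : ({g4} : Set (MvPolynomial (Fin 4) A)) ⊆ {g1,g2,g3,g4} := by
    intro x hx; rw [hx]; simp
  rw [show ({g1,g2,g3,g4} : Set (MvPolynomial (Fin 4) A)) = insert g1 {g2,g3,g4} from rfl,
    Ideal.mem_span_insert] at hP
  obtain ⟨r1, z1, hz1, rfl⟩ := hP
  rw [show ({g2,g3,g4} : Set (MvPolynomial (Fin 4) A)) = insert g2 {g3,g4} from rfl,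
    Ideal.mem_span_insert] at hz1
  obtain ⟨r2, z2, hz2, rfl⟩ := hz1
  rw [show ({g3,g4} : Set (MvPolynomial (Fin 4) A)) = insert g3 {g4} from rfl,
    Ideal.mem_span_insert] at hz2
  obtain ⟨r3, z3, hz3, rfl⟩ := hz2
  obtain ⟨r4, rfl⟩ := Ideal.mem_span_singleton'.mp hz3
  rw [map_add, map_add, map_add]
  refine add_mem (Ideal.span_mono hs1 (comp_mul_mem h1 r1 k)) (add_mem
    (Ideal.span_mono hs2 (comp_mul_mem h2 r2 k)) (add_mem
    (Ideal.span_mono hs3 (comp_mul_mem h3 r3 k))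
    (Ideal.span_mono hs4 (comp_mul_mem h4 r4 k))))

lemma monomial_fin2 (m : Fin 2 →₀ ℕ) (c : A) :
    monomial m c = C c * (X 0 ^ m 0 * X 1 ^ m 1) := by
  rw [monomial_eq, Finsupp.prod_fintype _ _ (fun i => pow_zero _), Fin.prod_univ_two]

lemma monomial_fin4 (m : Fin 4 →₀ ℕ) (c : A) :
    monomial m c = C c * (X 0 ^ m 0 * X 1 ^ m 1 * X 2 ^ m 2 * X 3 ^ m 3) := by
  rw [monomial_eq, Finsupp.prod_fintype _ _ (fun i => pow_zero _), Fin.prod_univ_four]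

lemma geom_homog (i j : Fin 4) (n : ℕ) (hn : 1 ≤ n) :
    (∑ k ∈ Finset.range n,
      (X i : MvPolynomial (Fin 4) A) ^ k * X j ^ (n - 1 - k)).IsHomogeneous (n - 1) := by
  rw [← mem_homogeneousSubmodule]
  apply Submodule.sum_mem
  intro k hk
  rw [Finset.mem_range] at hk
  rw [mem_homogeneousSubmodule]
  have h := (isHomogeneous_X_pow (R := A) i k).mul (isHomogeneous_X_pow (R := A) j (n - 1 - k))
  have : k + (n - 1 - k) = n - 1 := by omega
  rwa [this] at h

lemma monomial_decomp (m : Fin 2 →₀ ℕ) (c : A) :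
    ∃ D1 D2 : MvPolynomial (Fin 4) A,
      rename (![0,1] : Fin 2 → Fin 4) (monomial m c) -
          rename (![2,3] : Fin 2 → Fin 4) (monomial m c) =
        (X 0 - X 2) * D1 + (X 1 - X 3) * D2 ∧
      D1.IsHomogeneous (m 0 + m 1 - 1) ∧ D2.IsHomogeneous (m 0 + m 1 - 1) := by
  refine ⟨C c * ((∑ k ∈ Finset.range (m 0), X 0 ^ k * X 2 ^ (m 0 - 1 - k)) * X 1 ^ m 1),
      C c * (X 2 ^ m 0 * (∑ k ∈ Finset.range (m 1), X 1 ^ k * X 3 ^ (m 1 - 1 - k))), ?_, ?_, ?_⟩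
  · rw [monomial_fin2, map_mul, map_mul, map_mul, map_mul, rename_C, rename_C,
      map_pow, map_pow, map_pow, map_pow, rename_X, rename_X, rename_X, rename_X]
    have g1 := geom_sum₂_mul (X 0 : MvPolynomial (Fin 4) A) (X 2) (m 0)
    have g2 := geom_sum₂_mul (X 1 : MvPolynomial (Fin 4) A) (X 3) (m 1)
    show C c * ((X (![0,1] 0)) ^ m 0 * (X (![0,1] 1)) ^ m 1) -
        C c * ((X (![2,3] 0)) ^ m 0 * (X (![2,3] 1)) ^ m 1) = _
    show C c * ((X 0 : MvPolynomial (Fin 4) A) ^ m 0 * X 1 ^ m 1) -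
        C c * ((X 2 : MvPolynomial (Fin 4) A) ^ m 0 * X 3 ^ m 1) = _
    linear_combination (-(C c * (X 1 : MvPolynomial (Fin 4) A) ^ m 1)) * g1 -
      (C c * (X 2 : MvPolynomial (Fin 4) A) ^ m 0) * g2
  · rcases Nat.eq_zero_or_pos (m 0) with h0 | h0
    · have : (∑ k ∈ Finset.range (m 0),
          (X 0 : MvPolynomial (Fin 4) A) ^ k * X 2 ^ (m 0 - 1 - k)) = 0 := by
        rw [h0]; simp
      rw [this]
      simpa using isHomogeneous_zero (Fin 4) A (m 0 + m 1 - 1)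
    · have h := ((isHomogeneous_C (Fin 4) c).mul
        ((geom_homog 0 2 (m 0) h0).mul (isHomogeneous_X_pow (R := A) 1 (m 1))))
      have he : 0 + (m 0 - 1 + m 1) = m 0 + m 1 - 1 := by omega
      rwa [he] at h
  · rcases Nat.eq_zero_or_pos (m 1) with h0 | h0
    · have : (∑ k ∈ Finset.range (m 1),
          (X 1 : MvPolynomial (Fin 4) A) ^ k * X 3 ^ (m 1 - 1 - k)) = 0 := by
        rw [h0]; simp
      rw [this]
      simpa using isHomogeneous_zero (Fin 4) A (m 0 + m 1 - 1)
    · have h := ((isHomogeneous_C (Fin 4) c).mul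
        ((isHomogeneous_X_pow (R := A) 2 (m 0)).mul (geom_homog 1 3 (m 1) h0)))
      have he : 0 + (m 0 + (m 1 - 1)) = m 0 + m 1 - 1 := by omega
      rwa [he] at h

lemma exists_decomp {g : MvPolynomial (Fin 2) A} {d : ℕ} (hg : g.IsHomogeneous d) :
    ∃ D1 D2 : MvPolynomial (Fin 4) A,
      rename (![0,1] : Fin 2 → Fin 4) g - rename (![2,3] : Fin 2 → Fin 4) g =
        (X 0 - X 2) * D1 + (X 1 - X 3) * D2 ∧
      D1.IsHomogeneous (d - 1) ∧ D2.IsHomogeneous (d - 1) := by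
  classical
  choose D1 D2 heq h1 h2 using fun m : Fin 2 →₀ ℕ => monomial_decomp m (coeff m g)
  refine ⟨∑ m ∈ g.support, D1 m, ∑ m ∈ g.support, D2 m, ?_, ?_, ?_⟩
  · conv_lhs => rw [← support_sum_monomial_coeff g]
    rw [map_sum, map_sum, ← Finset.sum_sub_distrib]
    rw [Finset.sum_congr rfl (fun m _ => heq m), Finset.sum_add_distrib,
      ← Finset.mul_sum, ← Finset.mul_sum]
  · rw [← mem_homogeneousSubmodule]
    apply Submodule.sum_mem
    intro m hm
    rw [mem_homogeneousSubmodule]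
    have hd : m 0 + m 1 = d := by
      have := hg (mem_support_iff.mp hm)
      rwa [weight_one2] at this
    have := h1 m
    rwa [hd] at this
  · rw [← mem_homogeneousSubmodule]
    apply Submodule.sum_mem
    intro m hm
    rw [mem_homogeneousSubmodule]
    have hd : m 0 + m 1 = d := by
      have := hg (mem_support_iff.mp hm)
      rwa [weight_one2] at this
    have := h2 m
    rwa [hd] at this

lemma topcomp {P : MvPolynomial (Fin 4) A} {δ : ℕ} (hP : P.IsHomogeneous δ) :
    weightedHomogeneousComponent ![1,1,0,0] δ P =
      rename (![0,1] : Fin 2 → Fin 4)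
        (aeval (![X 0, X 1, 0, 0] : Fin 4 → MvPolynomial (Fin 2) A) P) := by
  conv_lhs => rw [← support_sum_monomial_coeff P]
  conv_rhs => rw [← support_sum_monomial_coeff P]
  rw [map_sum, map_sum, map_sum]
  apply Finset.sum_congr rfl
  intro m hm
  have hd : m 0 + m 1 + m 2 + m 3 = δ := by
    have := hP (mem_support_iff.mp hm); rwa [weight_one4] at this
  rw [aeval_monomial, Finsupp.prod_fintype _ _ (fun i => pow_zero _), Fin.prod_univ_four]
  by_cases h23 : m 2 = 0 ∧ m 3 = 0
  · rw [comp_monomial, if_pos (by rw [weight_wX]; omega)]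
    rw [monomial_fin4 m (coeff m P), h23.1, h23.2]
    simp [algebraMap_eq]
  · rw [comp_monomial, if_neg (by rw [weight_wX]; omega)]
    have : ((![X 0, X 1, 0, 0] : Fin 4 → MvPolynomial (Fin 2) A) 0) ^ m 0 *
        (![X 0, X 1, 0, 0] : Fin 4 → MvPolynomial (Fin 2) A) 1 ^ m 1 *
        (![X 0, X 1, 0, 0] : Fin 4 → MvPolynomial (Fin 2) A) 2 ^ m 2 *
        (![X 0, X 1, 0, 0] : Fin 4 → MvPolynomial (Fin 2) A) 3 ^ m 3 = 0 := by
      rcases (by omega : m 2 ≠ 0 ∨ m 3 ≠ 0) with h | h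
      · show (X 0:MvPolynomial (Fin 2) A) ^ m 0 * X 1 ^ m 1 * 0 ^ m 2 * 0 ^ m 3 = 0
        rw [zero_pow h]; ring
      · show (X 0:MvPolynomial (Fin 2) A) ^ m 0 * X 1 ^ m 1 * 0 ^ m 2 * 0 ^ m 3 = 0
        rw [zero_pow h]; ring
    rw [this, mul_zero, map_zero]

lemma botcomp (P : MvPolynomial (Fin 4) A) :
    weightedHomogeneousComponent ![1,1,0,0] 0 P =
      rename (![2,3] : Fin 2 → Fin 4)
        (aeval (![0, 0, X 0, X 1] : Fin 4 → MvPolynomial (Fin 2) A) P) := by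
  conv_lhs => rw [← support_sum_monomial_coeff P]
  conv_rhs => rw [← support_sum_monomial_coeff P]
  rw [map_sum, map_sum, map_sum]
  apply Finset.sum_congr rfl
  intro m _
  rw [aeval_monomial, Finsupp.prod_fintype _ _ (fun i => pow_zero _), Fin.prod_univ_four]
  by_cases h01 : m 0 = 0 ∧ m 1 = 0
  · rw [comp_monomial, if_pos (by rw [weight_wX]; omega)]
    rw [monomial_fin4 m (coeff m P), h01.1, h01.2]
    simp [algebraMap_eq]
  · rw [comp_monomial, if_neg (by rw [weight_wX]; omega)]
    have : ((![0, 0, X 0, X 1] : Fin 4 → MvPolynomial (Fin 2) A) 0) ^ m 0 *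
        (![0, 0, X 0, X 1] : Fin 4 → MvPolynomial (Fin 2) A) 1 ^ m 1 *
        (![0, 0, X 0, X 1] : Fin 4 → MvPolynomial (Fin 2) A) 2 ^ m 2 *
        (![0, 0, X 0, X 1] : Fin 4 → MvPolynomial (Fin 2) A) 3 ^ m 3 = 0 := by
      rcases (by omega : m 0 ≠ 0 ∨ m 1 ≠ 0) with h | h
      · show (0:MvPolynomial (Fin 2) A) ^ m 0 * 0 ^ m 1 * X 0 ^ m 2 * X 1 ^ m 3 = 0
        rw [zero_pow h]; ring
      · show (0:MvPolynomial (Fin 2) A) ^ m 0 * 0 ^ m 1 * X 0 ^ m 2 * X 1 ^ m 3 = 0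
        rw [zero_pow h]; ring
    rw [this, mul_zero, map_zero]

lemma det_unique {f1 f2 u1 v1 u2 v2 u1' v1' u2' v2' : MvPolynomial (Fin 2) A}
    (h1 : f1 = X 0 * u1 + X 1 * v1) (h1' : f1 = X 0 * u1' + X 1 * v1')
    (h2 : f2 = X 0 * u2 + X 1 * v2) (h2' : f2 = X 0 * u2' + X 1 * v2') :
    (u1 * v2 - v1 * u2) - (u1' * v2' - v1' * u2') ∈ Ideal.span {f1, f2} := by
  obtain ⟨w1, hw1u, hw1v⟩ := key (by decide : (0 : Fin 2) ≠ 1)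
    (show X 0 * (u1 - u1') = X 1 * (v1' - v1) by linear_combination h1' - h1)
  obtain ⟨w2, hw2u, hw2v⟩ := key (by decide : (0 : Fin 2) ≠ 1)
    (show X 0 * (u2 - u2') = X 1 * (v2' - v2) by linear_combination h2' - h2)
  rw [Ideal.mem_span_pair]
  refine ⟨-w2, w1, ?_⟩
  have e1 : u1' = u1 - X 1 * w1 := by linear_combination -hw1u
  have e2 : v1' = v1 + X 0 * w1 := by linear_combination hw1v
  have e3 : u2' = u2 - X 1 * w2 := by linear_combination -hw2u
  have e4 : v2' = v2 + X 0 * w2 := by linear_combination hw2v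
  rw [e1, e2, e3, e4, h1, h2]; ring

lemma morley_compare {F1 F2 h11 h12 h21 h22 H11 H12 H21 H22 : MvPolynomial (Fin 4) A}
    (e1 : F1 = (X 0 - X 2) * h11 + (X 1 - X 3) * h12)
    (e1' : F1 = (X 0 - X 2) * H11 + (X 1 - X 3) * H12)
    (e2 : F2 = (X 0 - X 2) * h21 + (X 1 - X 3) * h22)
    (e2' : F2 = (X 0 - X 2) * H21 + (X 1 - X 3) * H22) :
    ∃ w1 w2, (h11 * h22 - h12 * h21) - (H11 * H22 - H12 * H21) = w1 * F2 - w2 * F1 := by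
  obtain ⟨w1, hw1u, hw1v⟩ := keyXY
    (show (X 0 - X 2) * (h11 - H11) = (X 1 - X 3) * (H12 - h12) by linear_combination e1' - e1)
  obtain ⟨w2, hw2u, hw2v⟩ := keyXY
    (show (X 0 - X 2) * (h21 - H21) = (X 1 - X 3) * (H22 - h22) by linear_combination e2' - e2)
  refine ⟨w1, w2, ?_⟩
  have a1 : H11 = h11 - (X 1 - X 3) * w1 := by linear_combination -hw1u
  have a2 : H12 = h12 + (X 0 - X 2) * w1 := by linear_combination hw1v
  have a3 : H21 = h21 - (X 1 - X 3) * w2 := by linear_combination -hw2u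
  have a4 : H22 = h22 + (X 0 - X 2) * w2 := by linear_combination hw2v
  rw [a1, a2, a3, a4, e1, e2]; ring

lemma rename_span_pair {x g1 g2 : MvPolynomial (Fin 2) A}
    (hx : x ∈ Ideal.span {g1, g2}) (f : Fin 2 → Fin 4) :
    rename f x ∈ Ideal.span {rename f g1, rename f g2} := by
  have h := Ideal.mem_map_of_mem
    ((rename f : MvPolynomial (Fin 2) A →ₐ[A] MvPolynomial (Fin 4) A).toRingHom) hx
  rwa [Ideal.map_span, Set.image_insert_eq, Set.image_singleton] at h

lemma deg_pos {f : MvPolynomial (Fin 2) A} {d : ℕ} (hf : f.IsHomogeneous d)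
    (hc : coeff 0 f = 0) (hne : f ≠ 0) : 1 ≤ d := by
  rcases Nat.eq_zero_or_pos d with rfl | h
  · exfalso
    apply hne
    ext m
    rcases eq_or_ne m 0 with rfl | hm
    · rw [coeff_zero]; exact hc
    · rw [coeff_zero]
      apply hf.coeff_eq_zero
      exact fun h0 => hm ((Finsupp.degree_eq_zero_iff m).mp h0)
  · exact h

end Stmt6Aux

open Stmt6Aux

/-- The Morley form satisfies `(X_i − Y_i) · morl(f1,f2) = 0` in
`[B ⊗_A B]_{δ+1}` for `i = 1,2`, and consequently, for all `p + q = δ` and all `b ∈ B_q`,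
`(b ⊗ 1) · morl_{p,q}(f1,f2) = sylv_{(0,0)}(f1,f2) ⊗ b`, and for all `b ∈ B_p`,
`(1 ⊗ b) · morl_{p,q}(f1,f2) = b ⊗ sylv_{(0,0)}(f1,f2)`.  Everything is expressed via
representatives in `A[X,Y]` modulo `J = (f1(X),f2(X),f1(Y),f2(Y))`: `morl` is
`det (h_{i,j})` for a decomposition `f_i(X) − f_i(Y) = (X1−Y1)h_{i,1} + (X2−Y2)h_{i,2}`,
`morl_{p,q}` its weight-(1,1,0,0) homogeneous component of degree `p`, and
`sylv_{(0,0)}` is `det (a_{i,j})` for decompositions `f_i = X1 a_{i,1} + X2 a_{i,2}`. -/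
theorem stmt6 {A : Type*} [CommRing A] [Nontrivial A] (d1 d2 : ℕ)
    (f1 f2 : MvPolynomial (Fin 2) A)
    (hf1 : f1.IsHomogeneous d1) (hf2 : f2.IsHomogeneous d2)
    (hreg : RingTheory.Sequence.IsRegular (MvPolynomial (Fin 2) A) [f1, f2])
    (F1X F2X F1Y F2Y : MvPolynomial (Fin 4) A)
    (hF1X : F1X = rename ![0, 1] f1) (hF2X : F2X = rename ![0, 1] f2)
    (hF1Y : F1Y = rename ![2, 3] f1) (hF2Y : F2Y = rename ![2, 3] f2)
    (h11 h12 h21 h22 : MvPolynomial (Fin 4) A)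
    (hh1 : F1X - F1Y = (X 0 - X 2) * h11 + (X 1 - X 3) * h12)
    (hh2 : F2X - F2Y = (X 0 - X 2) * h21 + (X 1 - X 3) * h22)
    (a11 a12 a21 a22 : MvPolynomial (Fin 2) A)
    (ha11 : a11.IsHomogeneous (d1 - 1)) (ha12 : a12.IsHomogeneous (d1 - 1))
    (ha21 : a21.IsHomogeneous (d2 - 1)) (ha22 : a22.IsHomogeneous (d2 - 1))
    (hfa1 : f1 = X 0 * a11 + X 1 * a12)
    (hfa2 : f2 = X 0 * a21 + X 1 * a22) :
    ((X 0 - X 2) * (h11 * h22 - h12 * h21) ∈ Ideal.span {F1X, F2X, F1Y, F2Y}) ∧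
    ((X 1 - X 3) * (h11 * h22 - h12 * h21) ∈ Ideal.span {F1X, F2X, F1Y, F2Y}) ∧
    (∀ p q : ℕ, p + q = d1 + d2 - 2 →
      (∀ b : MvPolynomial (Fin 2) A, b.IsHomogeneous q →
        rename ![0, 1] b *
            weightedHomogeneousComponent ![1, 1, 0, 0] p (h11 * h22 - h12 * h21) -
          rename ![0, 1] (a11 * a22 - a12 * a21) * rename ![2, 3] b ∈
          Ideal.span {F1X, F2X, F1Y, F2Y}) ∧
      (∀ b : MvPolynomial (Fin 2) A, b.IsHomogeneous p →
        rename ![2, 3] b *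
            weightedHomogeneousComponent ![1, 1, 0, 0] p (h11 * h22 - h12 * h21) -
          rename ![0, 1] b * rename ![2, 3] (a11 * a22 - a12 * a21) ∈
          Ideal.span {F1X, F2X, F1Y, F2Y})) := by
  classical
  -- positivity of the degrees
  rw [RingTheory.Sequence.isRegular_cons_iff] at hreg
  obtain ⟨hreg1, hreg2⟩ := hreg
  have hf1ne : f1 ≠ 0 := by
    rintro rfl
    exact (not_subsingleton_iff_nontrivial.mpr inferInstance) hreg1.subsingleton
  have hf2ne : f2 ≠ 0 := by
    rintro rfl
    have hsm : IsSMulRegular (QuotSMulTop f1 (MvPolynomial (Fin 2) A)) (0 : MvPolynomial (Fin 2) A) :=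
      ((RingTheory.Sequence.isWeaklyRegular_cons_iff _ _ _).mp hreg2.toIsWeaklyRegular).1
    have hsub := hsm.subsingleton
    exact hreg2.top_ne_smul
      ((Submodule.eq_top_iff'.mpr (fun x => by rw [Subsingleton.elim x 0]; exact zero_mem _)).symm)
  have hc1 : coeff 0 f1 = 0 := by
    have h : constantCoeff f1 = 0 := by rw [hfa1]; simp
    rwa [constantCoeff_eq] at h
  have hc2 : coeff 0 f2 = 0 := by
    have h : constantCoeff f2 = 0 := by rw [hfa2]; simp
    rwa [constantCoeff_eq] at h
  have hd1 : 1 ≤ d1 := deg_pos hf1 hc1 hf1ne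
  have hd2 : 1 ≤ d2 := deg_pos hf2 hc2 hf2ne
  -- homogeneous Morley decomposition
  obtain ⟨H11, H12, hhs1, hH11, hH12⟩ := exists_decomp hf1
  obtain ⟨H21, H22, hhs2, hH21, hH22⟩ := exists_decomp hf2
  rw [← hF1X, ← hF1Y] at hhs1
  rw [← hF2X, ← hF2Y] at hhs2
  have hΔsHom : (H11 * H22 - H12 * H21).IsHomogeneous (d1 + d2 - 2) := by
    rw [← mem_homogeneousSubmodule]
    apply sub_mem <;> rw [mem_homogeneousSubmodule]
    · have h := hH11.mul hH22
      rwa [show d1 - 1 + (d2 - 1) = d1 + d2 - 2 by omega] at h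
    · have h := hH12.mul hH21
      rwa [show d1 - 1 + (d2 - 1) = d1 + d2 - 2 by omega] at h
  -- generators are weighted homogeneous
  have hw1X : IsWeightedHomogeneous ![1,1,0,0] F1X d1 := hF1X ▸ renameX_wh hf1
  have hw2X : IsWeightedHomogeneous ![1,1,0,0] F2X d2 := hF2X ▸ renameX_wh hf2
  have hw1Y : IsWeightedHomogeneous ![1,1,0,0] F1Y 0 := hF1Y ▸ renameY_wh f1
  have hw2Y : IsWeightedHomogeneous ![1,1,0,0] F2Y 0 := hF2Y ▸ renameY_wh f2
  have hJcomp : ∀ {P : MvPolynomial (Fin 4) A}, P ∈ Ideal.span {F1X, F2X, F1Y, F2Y} → ∀ k,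
      weightedHomogeneousComponent ![1,1,0,0] k P ∈ Ideal.span {F1X, F2X, F1Y, F2Y} :=
    fun hP k => span4_comp hw1X hw2X hw1Y hw2Y hP k
  have hF1Xm : F1X ∈ Ideal.span {F1X, F2X, F1Y, F2Y} := Ideal.subset_span (by simp)
  have hF2Xm : F2X ∈ Ideal.span {F1X, F2X, F1Y, F2Y} := Ideal.subset_span (by simp)
  have hF1Ym : F1Y ∈ Ideal.span {F1X, F2X, F1Y, F2Y} := Ideal.subset_span (by simp)
  have hF2Ym : F2Y ∈ Ideal.span {F1X, F2X, F1Y, F2Y} := Ideal.subset_span (by simp)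
  have hFdiff1 : F1X - F1Y ∈ Ideal.span {F1X, F2X, F1Y, F2Y} := sub_mem hF1Xm hF1Ym
  have hFdiff2 : F2X - F2Y ∈ Ideal.span {F1X, F2X, F1Y, F2Y} := sub_mem hF2Xm hF2Ym
  -- part 1 and 2 (for both the original and homogeneous Morley forms)
  have mem1 : (X 0 - X 2) * (h11 * h22 - h12 * h21) ∈ Ideal.span {F1X, F2X, F1Y, F2Y} := by
    have hid : (X 0 - X 2) * (h11 * h22 - h12 * h21) =
        h22 * (F1X - F1Y) - h12 * (F2X - F2Y) := by
      linear_combination (-h22) * hh1 + h12 * hh2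
    rw [hid]
    exact sub_mem (Ideal.mul_mem_left _ _ hFdiff1) (Ideal.mul_mem_left _ _ hFdiff2)
  have mem2 : (X 1 - X 3) * (h11 * h22 - h12 * h21) ∈ Ideal.span {F1X, F2X, F1Y, F2Y} := by
    have hid : (X 1 - X 3) * (h11 * h22 - h12 * h21) =
        (-h21) * (F1X - F1Y) + h11 * (F2X - F2Y) := by
      linear_combination h21 * hh1 + (-h11) * hh2
    rw [hid]
    exact add_mem (Ideal.mul_mem_left _ _ hFdiff1) (Ideal.mul_mem_left _ _ hFdiff2)
  have mem1s : (X 0 - X 2) * (H11 * H22 - H12 * H21) ∈ Ideal.span {F1X, F2X, F1Y, F2Y} := by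
    have hid : (X 0 - X 2) * (H11 * H22 - H12 * H21) =
        H22 * (F1X - F1Y) - H12 * (F2X - F2Y) := by
      linear_combination (-H22) * hhs1 + H12 * hhs2
    rw [hid]
    exact sub_mem (Ideal.mul_mem_left _ _ hFdiff1) (Ideal.mul_mem_left _ _ hFdiff2)
  have mem2s : (X 1 - X 3) * (H11 * H22 - H12 * H21) ∈ Ideal.span {F1X, F2X, F1Y, F2Y} := by
    have hid : (X 1 - X 3) * (H11 * H22 - H12 * H21) =
        (-H21) * (F1X - F1Y) + H11 * (F2X - F2Y) := by
      linear_combination H21 * hhs1 + (-H11) * hhs2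
    rw [hid]
    exact add_mem (Ideal.mul_mem_left _ _ hFdiff1) (Ideal.mul_mem_left _ _ hFdiff2)
  -- comparison between the two Morley forms
  have hΔdiff : (h11 * h22 - h12 * h21) - (H11 * H22 - H12 * H21) ∈
      Ideal.span {F1X, F2X, F1Y, F2Y} := by
    obtain ⟨w1, w2, hcmp⟩ := morley_compare hh1 hhs1 hh2 hhs2
    rw [hcmp]
    exact sub_mem (Ideal.mul_mem_left _ _ hFdiff2) (Ideal.mul_mem_left _ _ hFdiff1)
  -- evaluation at Y = 0 resp. X = 0
  have hvX0 : ((![X 0, X 1, 0, 0] : Fin 4 → MvPolynomial (Fin 2) A) ∘ ![0,1]) = X := by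
    funext i; fin_cases i <;> rfl
  have hvX1 : ((![X 0, X 1, 0, 0] : Fin 4 → MvPolynomial (Fin 2) A) ∘ ![2,3]) =
      (fun _ => 0) := by
    funext i; fin_cases i <;> rfl
  have hvY0 : ((![0, 0, X 0, X 1] : Fin 4 → MvPolynomial (Fin 2) A) ∘ ![0,1]) =
      (fun _ => 0) := by
    funext i; fin_cases i <;> rfl
  have hvY1 : ((![0, 0, X 0, X 1] : Fin 4 → MvPolynomial (Fin 2) A) ∘ ![2,3]) = X := by
    funext i; fin_cases i <;> rfl
  have heXF1X : aeval (![X 0, X 1, 0, 0] : Fin 4 → MvPolynomial (Fin 2) A) F1X = f1 := by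
    rw [hF1X, aeval_rename, hvX0, aeval_X_left_apply]
  have heXF2X : aeval (![X 0, X 1, 0, 0] : Fin 4 → MvPolynomial (Fin 2) A) F2X = f2 := by
    rw [hF2X, aeval_rename, hvX0, aeval_X_left_apply]
  have heXF1Y : aeval (![X 0, X 1, 0, 0] : Fin 4 → MvPolynomial (Fin 2) A) F1Y = 0 := by
    rw [hF1Y, aeval_rename, hvX1, aeval_zero']
    rw [show constantCoeff f1 = 0 from by rw [constantCoeff_eq]; exact hc1, map_zero]
  have heXF2Y : aeval (![X 0, X 1, 0, 0] : Fin 4 → MvPolynomial (Fin 2) A) F2Y = 0 := by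
    rw [hF2Y, aeval_rename, hvX1, aeval_zero']
    rw [show constantCoeff f2 = 0 from by rw [constantCoeff_eq]; exact hc2, map_zero]
  have heYF1X : aeval (![0, 0, X 0, X 1] : Fin 4 → MvPolynomial (Fin 2) A) F1X = 0 := by
    rw [hF1X, aeval_rename, hvY0, aeval_zero']
    rw [show constantCoeff f1 = 0 from by rw [constantCoeff_eq]; exact hc1, map_zero]
  have heYF2X : aeval (![0, 0, X 0, X 1] : Fin 4 → MvPolynomial (Fin 2) A) F2X = 0 := by
    rw [hF2X, aeval_rename, hvY0, aeval_zero']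
    rw [show constantCoeff f2 = 0 from by rw [constantCoeff_eq]; exact hc2, map_zero]
  have heYF1Y : aeval (![0, 0, X 0, X 1] : Fin 4 → MvPolynomial (Fin 2) A) F1Y = f1 := by
    rw [hF1Y, aeval_rename, hvY1, aeval_X_left_apply]
  have heYF2Y : aeval (![0, 0, X 0, X 1] : Fin 4 → MvPolynomial (Fin 2) A) F2Y = f2 := by
    rw [hF2Y, aeval_rename, hvY1, aeval_X_left_apply]
  -- the evaluated homogeneous Morley rows decompose f1, f2
  have hdec1X : f1 = X 0 * (aeval (![X 0, X 1, 0, 0] : Fin 4 → MvPolynomial (Fin 2) A) H11) +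
      X 1 * (aeval (![X 0, X 1, 0, 0] : Fin 4 → MvPolynomial (Fin 2) A) H12) := by
    have h' := congrArg (aeval (![X 0, X 1, 0, 0] : Fin 4 → MvPolynomial (Fin 2) A)) hhs1
    simp only [map_sub, map_add, map_mul, aeval_X] at h'
    rw [heXF1X, heXF1Y] at h'
    have v0 : (![X 0, X 1, 0, 0] : Fin 4 → MvPolynomial (Fin 2) A) 0 = X 0 := rfl
    have v1 : (![X 0, X 1, 0, 0] : Fin 4 → MvPolynomial (Fin 2) A) 1 = X 1 := rfl
    have v2 : (![X 0, X 1, 0, 0] : Fin 4 → MvPolynomial (Fin 2) A) 2 = 0 := rfl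
    have v3 : (![X 0, X 1, 0, 0] : Fin 4 → MvPolynomial (Fin 2) A) 3 = 0 := rfl
    rw [v0, v1, v2, v3] at h'
    linear_combination h'
  have hdec2X : f2 = X 0 * (aeval (![X 0, X 1, 0, 0] : Fin 4 → MvPolynomial (Fin 2) A) H21) +
      X 1 * (aeval (![X 0, X 1, 0, 0] : Fin 4 → MvPolynomial (Fin 2) A) H22) := by
    have h' := congrArg (aeval (![X 0, X 1, 0, 0] : Fin 4 → MvPolynomial (Fin 2) A)) hhs2
    simp only [map_sub, map_add, map_mul, aeval_X] at h'
    rw [heXF2X, heXF2Y] at h'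
    have v0 : (![X 0, X 1, 0, 0] : Fin 4 → MvPolynomial (Fin 2) A) 0 = X 0 := rfl
    have v1 : (![X 0, X 1, 0, 0] : Fin 4 → MvPolynomial (Fin 2) A) 1 = X 1 := rfl
    have v2 : (![X 0, X 1, 0, 0] : Fin 4 → MvPolynomial (Fin 2) A) 2 = 0 := rfl
    have v3 : (![X 0, X 1, 0, 0] : Fin 4 → MvPolynomial (Fin 2) A) 3 = 0 := rfl
    rw [v0, v1, v2, v3] at h'
    linear_combination h'
  have hdec1Y : f1 = X 0 * (aeval (![0, 0, X 0, X 1] : Fin 4 → MvPolynomial (Fin 2) A) H11) +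
      X 1 * (aeval (![0, 0, X 0, X 1] : Fin 4 → MvPolynomial (Fin 2) A) H12) := by
    have h' := congrArg (aeval (![0, 0, X 0, X 1] : Fin 4 → MvPolynomial (Fin 2) A)) hhs1
    simp only [map_sub, map_add, map_mul, aeval_X] at h'
    rw [heYF1X, heYF1Y] at h'
    have v0 : (![0, 0, X 0, X 1] : Fin 4 → MvPolynomial (Fin 2) A) 0 = 0 := rfl
    have v1 : (![0, 0, X 0, X 1] : Fin 4 → MvPolynomial (Fin 2) A) 1 = 0 := rfl
    have v2 : (![0, 0, X 0, X 1] : Fin 4 → MvPolynomial (Fin 2) A) 2 = X 0 := rfl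
    have v3 : (![0, 0, X 0, X 1] : Fin 4 → MvPolynomial (Fin 2) A) 3 = X 1 := rfl
    rw [v0, v1, v2, v3] at h'
    linear_combination -h'
  have hdec2Y : f2 = X 0 * (aeval (![0, 0, X 0, X 1] : Fin 4 → MvPolynomial (Fin 2) A) H21) +
      X 1 * (aeval (![0, 0, X 0, X 1] : Fin 4 → MvPolynomial (Fin 2) A) H22) := by
    have h' := congrArg (aeval (![0, 0, X 0, X 1] : Fin 4 → MvPolynomial (Fin 2) A)) hhs2
    simp only [map_sub, map_add, map_mul, aeval_X] at h'
    rw [heYF2X, heYF2Y] at h'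
    have v0 : (![0, 0, X 0, X 1] : Fin 4 → MvPolynomial (Fin 2) A) 0 = 0 := rfl
    have v1 : (![0, 0, X 0, X 1] : Fin 4 → MvPolynomial (Fin 2) A) 1 = 0 := rfl
    have v2 : (![0, 0, X 0, X 1] : Fin 4 → MvPolynomial (Fin 2) A) 2 = X 0 := rfl
    have v3 : (![0, 0, X 0, X 1] : Fin 4 → MvPolynomial (Fin 2) A) 3 = X 1 := rfl
    rw [v0, v1, v2, v3] at h'
    linear_combination -h'
  -- Sylvester comparison after evaluation
  have hXsylv : rename (![0,1] : Fin 2 → Fin 4)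
        (aeval (![X 0, X 1, 0, 0] : Fin 4 → MvPolynomial (Fin 2) A) (H11 * H22 - H12 * H21)) -
      rename (![0,1] : Fin 2 → Fin 4) (a11 * a22 - a12 * a21) ∈
      Ideal.span {F1X, F2X, F1Y, F2Y} := by
    have hmem := det_unique hdec1X hfa1 hdec2X hfa2
    have := rename_span_pair hmem ![0,1]
    rw [map_sub] at this
    rw [← hF1X, ← hF2X] at this
    refine Ideal.span_mono ?_ (by
      rw [show rename (![0,1] : Fin 2 → Fin 4)
          (aeval (![X 0, X 1, 0, 0] : Fin 4 → MvPolynomial (Fin 2) A) (H11 * H22 - H12 * H21)) =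
          rename (![0,1] : Fin 2 → Fin 4)
            (aeval (![X 0, X 1, 0, 0] : Fin 4 → MvPolynomial (Fin 2) A) H11 *
              aeval (![X 0, X 1, 0, 0] : Fin 4 → MvPolynomial (Fin 2) A) H22 -
             aeval (![X 0, X 1, 0, 0] : Fin 4 → MvPolynomial (Fin 2) A) H12 *
              aeval (![X 0, X 1, 0, 0] : Fin 4 → MvPolynomial (Fin 2) A) H21) from by
        rw [map_sub, map_mul, map_mul]]
      exact this)
    intro x hx
    rcases hx with h | h
    · rw [h]; simp
    · rw [Set.mem_singleton_iff] at h; rw [h]; simp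
  have hYsylv : rename (![2,3] : Fin 2 → Fin 4)
        (aeval (![0, 0, X 0, X 1] : Fin 4 → MvPolynomial (Fin 2) A) (H11 * H22 - H12 * H21)) -
      rename (![2,3] : Fin 2 → Fin 4) (a11 * a22 - a12 * a21) ∈
      Ideal.span {F1X, F2X, F1Y, F2Y} := by
    have hmem := det_unique hdec1Y hfa1 hdec2Y hfa2
    have := rename_span_pair hmem ![2,3]
    rw [map_sub] at this
    rw [← hF1Y, ← hF2Y] at this
    refine Ideal.span_mono ?_ (by
      rw [show rename (![2,3] : Fin 2 → Fin 4)
          (aeval (![0, 0, X 0, X 1] : Fin 4 → MvPolynomial (Fin 2) A) (H11 * H22 - H12 * H21)) =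
          rename (![2,3] : Fin 2 → Fin 4)
            (aeval (![0, 0, X 0, X 1] : Fin 4 → MvPolynomial (Fin 2) A) H11 *
              aeval (![0, 0, X 0, X 1] : Fin 4 → MvPolynomial (Fin 2) A) H22 -
             aeval (![0, 0, X 0, X 1] : Fin 4 → MvPolynomial (Fin 2) A) H12 *
              aeval (![0, 0, X 0, X 1] : Fin 4 → MvPolynomial (Fin 2) A) H21) from by
        rw [map_sub, map_mul, map_mul]]
      exact this)
    intro x hx
    rcases hx with h | h
    · rw [h]; simp
    · rw [Set.mem_singleton_iff] at h; rw [h]; simp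
  refine ⟨mem1, mem2, ?_⟩
  intro p q hpq
  constructor
  · -- first duality statement
    intro b hb
    obtain ⟨c1, c2, hbdec, _, _⟩ := exists_decomp hb
    have hbX : IsWeightedHomogeneous ![1,1,0,0] (rename (![0,1] : Fin 2 → Fin 4) b) q :=
      renameX_wh hb
    have hbY : IsWeightedHomogeneous ![1,1,0,0] (rename (![2,3] : Fin 2 → Fin 4) b) 0 :=
      renameY_wh b
    have hE : rename (![0,1] : Fin 2 → Fin 4) b * (H11 * H22 - H12 * H21) -
        rename (![2,3] : Fin 2 → Fin 4) b * (H11 * H22 - H12 * H21) ∈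
        Ideal.span {F1X, F2X, F1Y, F2Y} := by
      have hid : rename (![0,1] : Fin 2 → Fin 4) b * (H11 * H22 - H12 * H21) -
          rename (![2,3] : Fin 2 → Fin 4) b * (H11 * H22 - H12 * H21) =
          c1 * ((X 0 - X 2) * (H11 * H22 - H12 * H21)) +
          c2 * ((X 1 - X 3) * (H11 * H22 - H12 * H21)) := by
        linear_combination (H11 * H22 - H12 * H21) * hbdec
      rw [hid]
      exact add_mem (Ideal.mul_mem_left _ _ mem1s) (Ideal.mul_mem_left _ _ mem2s)
    have hcomp := hJcomp hE (d1 + d2 - 2)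
    rw [map_sub] at hcomp
    have c1e : weightedHomogeneousComponent ![1,1,0,0] (d1 + d2 - 2)
        (rename (![0,1] : Fin 2 → Fin 4) b * (H11 * H22 - H12 * H21)) =
        rename (![0,1] : Fin 2 → Fin 4) b *
          weightedHomogeneousComponent ![1,1,0,0] p (H11 * H22 - H12 * H21) := by
      have h := comp_mul hbX (H11 * H22 - H12 * H21) p
      rwa [show q + p = d1 + d2 - 2 by omega] at h
    have c2e : weightedHomogeneousComponent ![1,1,0,0] (d1 + d2 - 2)
        (rename (![2,3] : Fin 2 → Fin 4) b * (H11 * H22 - H12 * H21)) =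
        rename (![2,3] : Fin 2 → Fin 4) b *
          weightedHomogeneousComponent ![1,1,0,0] (d1 + d2 - 2) (H11 * H22 - H12 * H21) := by
      have h := comp_mul hbY (H11 * H22 - H12 * H21) (d1 + d2 - 2)
      rwa [zero_add] at h
    rw [c1e, c2e] at hcomp
    have htop : weightedHomogeneousComponent ![1,1,0,0] (d1 + d2 - 2) (H11 * H22 - H12 * H21) =
        rename (![0,1] : Fin 2 → Fin 4)
          (aeval (![X 0, X 1, 0, 0] : Fin 4 → MvPolynomial (Fin 2) A)
            (H11 * H22 - H12 * H21)) := topcomp hΔsHom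
    have hdiff : rename (![0,1] : Fin 2 → Fin 4) b *
        (weightedHomogeneousComponent ![1,1,0,0] p (h11 * h22 - h12 * h21) -
         weightedHomogeneousComponent ![1,1,0,0] p (H11 * H22 - H12 * H21)) ∈
        Ideal.span {F1X, F2X, F1Y, F2Y} := by
      refine Ideal.mul_mem_left _ _ ?_
      rw [← map_sub]
      exact hJcomp hΔdiff p
    have hthird : rename (![2,3] : Fin 2 → Fin 4) b *
        (weightedHomogeneousComponent ![1,1,0,0] (d1 + d2 - 2) (H11 * H22 - H12 * H21) -
         rename (![0,1] : Fin 2 → Fin 4) (a11 * a22 - a12 * a21)) ∈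
        Ideal.span {F1X, F2X, F1Y, F2Y} := by
      refine Ideal.mul_mem_left _ _ ?_
      rw [htop]
      exact hXsylv
    have hfinal : rename ![0, 1] b *
        weightedHomogeneousComponent ![1, 1, 0, 0] p (h11 * h22 - h12 * h21) -
        rename ![0, 1] (a11 * a22 - a12 * a21) * rename ![2, 3] b =
        rename (![0,1] : Fin 2 → Fin 4) b *
          (weightedHomogeneousComponent ![1,1,0,0] p (h11 * h22 - h12 * h21) -
           weightedHomogeneousComponent ![1,1,0,0] p (H11 * H22 - H12 * H21)) +
        (rename (![0,1] : Fin 2 → Fin 4) b *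
           weightedHomogeneousComponent ![1,1,0,0] p (H11 * H22 - H12 * H21) -
         rename (![2,3] : Fin 2 → Fin 4) b *
           weightedHomogeneousComponent ![1,1,0,0] (d1 + d2 - 2) (H11 * H22 - H12 * H21)) +
        rename (![2,3] : Fin 2 → Fin 4) b *
          (weightedHomogeneousComponent ![1,1,0,0] (d1 + d2 - 2) (H11 * H22 - H12 * H21) -
           rename (![0,1] : Fin 2 → Fin 4) (a11 * a22 - a12 * a21)) := by
      ring
    rw [hfinal]
    exact add_mem (add_mem hdiff hcomp) hthird
  · -- second duality statement
    intro b hb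
    obtain ⟨c1, c2, hbdec, _, _⟩ := exists_decomp hb
    have hbX : IsWeightedHomogeneous ![1,1,0,0] (rename (![0,1] : Fin 2 → Fin 4) b) p :=
      renameX_wh hb
    have hbY : IsWeightedHomogeneous ![1,1,0,0] (rename (![2,3] : Fin 2 → Fin 4) b) 0 :=
      renameY_wh b
    have hE : rename (![0,1] : Fin 2 → Fin 4) b * (H11 * H22 - H12 * H21) -
        rename (![2,3] : Fin 2 → Fin 4) b * (H11 * H22 - H12 * H21) ∈
        Ideal.span {F1X, F2X, F1Y, F2Y} := by
      have hid : rename (![0,1] : Fin 2 → Fin 4) b * (H11 * H22 - H12 * H21) -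
          rename (![2,3] : Fin 2 → Fin 4) b * (H11 * H22 - H12 * H21) =
          c1 * ((X 0 - X 2) * (H11 * H22 - H12 * H21)) +
          c2 * ((X 1 - X 3) * (H11 * H22 - H12 * H21)) := by
        linear_combination (H11 * H22 - H12 * H21) * hbdec
      rw [hid]
      exact add_mem (Ideal.mul_mem_left _ _ mem1s) (Ideal.mul_mem_left _ _ mem2s)
    have hcomp := hJcomp hE p
    rw [map_sub] at hcomp
    have c1e : weightedHomogeneousComponent ![1,1,0,0] p
        (rename (![0,1] : Fin 2 → Fin 4) b * (H11 * H22 - H12 * H21)) =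
        rename (![0,1] : Fin 2 → Fin 4) b *
          weightedHomogeneousComponent ![1,1,0,0] 0 (H11 * H22 - H12 * H21) := by
      have h := comp_mul hbX (H11 * H22 - H12 * H21) 0
      rwa [add_zero] at h
    have c2e : weightedHomogeneousComponent ![1,1,0,0] p
        (rename (![2,3] : Fin 2 → Fin 4) b * (H11 * H22 - H12 * H21)) =
        rename (![2,3] : Fin 2 → Fin 4) b *
          weightedHomogeneousComponent ![1,1,0,0] p (H11 * H22 - H12 * H21) := by
      have h := comp_mul hbY (H11 * H22 - H12 * H21) p
      rwa [zero_add] at h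
    rw [c1e, c2e] at hcomp
    have hbot : weightedHomogeneousComponent ![1,1,0,0] 0 (H11 * H22 - H12 * H21) =
        rename (![2,3] : Fin 2 → Fin 4)
          (aeval (![0, 0, X 0, X 1] : Fin 4 → MvPolynomial (Fin 2) A)
            (H11 * H22 - H12 * H21)) := botcomp _
    have hdiff : rename (![2,3] : Fin 2 → Fin 4) b *
        (weightedHomogeneousComponent ![1,1,0,0] p (h11 * h22 - h12 * h21) -
         weightedHomogeneousComponent ![1,1,0,0] p (H11 * H22 - H12 * H21)) ∈
        Ideal.span {F1X, F2X, F1Y, F2Y} := by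
      refine Ideal.mul_mem_left _ _ ?_
      rw [← map_sub]
      exact hJcomp hΔdiff p
    have hthird : rename (![0,1] : Fin 2 → Fin 4) b *
        (weightedHomogeneousComponent ![1,1,0,0] 0 (H11 * H22 - H12 * H21) -
         rename (![2,3] : Fin 2 → Fin 4) (a11 * a22 - a12 * a21)) ∈
        Ideal.span {F1X, F2X, F1Y, F2Y} := by
      refine Ideal.mul_mem_left _ _ ?_
      rw [hbot]
      exact hYsylv
    have hfinal : rename ![2, 3] b *
        weightedHomogeneousComponent ![1, 1, 0, 0] p (h11 * h22 - h12 * h21) -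
        rename ![0, 1] b * rename ![2, 3] (a11 * a22 - a12 * a21) =
        rename (![2,3] : Fin 2 → Fin 4) b *
          (weightedHomogeneousComponent ![1,1,0,0] p (h11 * h22 - h12 * h21) -
           weightedHomogeneousComponent ![1,1,0,0] p (H11 * H22 - H12 * H21)) -
        (rename (![0,1] : Fin 2 → Fin 4) b *
           weightedHomogeneousComponent ![1,1,0,0] 0 (H11 * H22 - H12 * H21) -
         rename (![2,3] : Fin 2 → Fin 4) b *
           weightedHomogeneousComponent ![1,1,0,0] p (H11 * H22 - H12 * H21)) +
        rename (![0,1] : Fin 2 → Fin 4) b *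
          (weightedHomogeneousComponent ![1,1,0,0] 0 (H11 * H22 - H12 * H21) -
           rename (![2,3] : Fin 2 → Fin 4) (a11 * a22 - a12 * a21)) := by
      ring
    rw [hfinal]
    exact add_mem (sub_mem hdiff hcomp) hthird
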